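/- If P is a semi-regular poset representation (with any number of orbits) of a group G that is neither trivial nor isomorphic to ℤ/2ℤ, then P is connected, i.e., any two points of P are related by the reflexive-transitive closure of the comparability relation (x and y are comparable when x ≤ y or y ≤ x). -/

import Mathlib

/-- Build an order isomorphism from mutually inverse monotone maps. -/
def mkIsoAux {P : Type*} [PartialOrder P] (f g : P → P)
    (hfg : ∀ z, g (f z) = z) (hgf : ∀ z, f (g z) = z)
    (hf : ∀ z w, z ≤ w → f z ≤ f w) (hg : ∀ z w, z ≤ w → g z ≤ g w) : P ≃o P :=
  { toFun := f, invFun := g, left_inv := hfg, right_inv := hgf,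
    map_rel_iff' := fun {z w} => by
      constructor
      · intro h
        have h' : f z ≤ f w := h
        have := hg _ _ h'
        rwa [hfg, hfg] at this
      · intro h
        exact hf _ _ h }

/-- A nontrivial group not isomorphic to `ℤ/2ℤ` contains two distinct nontrivial
elements. -/
lemma exists_two_ne_aux (G : Type*) [Group G] (hnt : Nontrivial G)
    (h2 : IsEmpty (G ≃* Multiplicative (ZMod 2))) :
    ∃ a b : G, a ≠ 1 ∧ b ≠ 1 ∧ a ≠ b := by
  classical
  obtain ⟨a, ha⟩ := exists_ne (1 : G)
  by_contra h
  push_neg at h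
  -- every nontrivial element equals `a`
  have huniq : ∀ g : G, g ≠ 1 → g = a := fun g hg => h g a hg ha
  have haa : a * a = 1 := by
    by_contra haa
    have h1 : a * a = a := huniq _ haa
    exact ha (mul_left_cancel (a := a) (by rw [h1, mul_one]))
  have hne : (Multiplicative.ofAdd (1 : ZMod 2)) ≠ (1 : Multiplicative (ZMod 2)) := by decide
  refine h2.false ?_
  refine ⟨⟨fun g => if g = 1 then 1 else Multiplicative.ofAdd 1,
    fun z => if z = 1 then 1 else a, ?_, ?_⟩, ?_⟩
  · intro g
    by_cases hg : g = 1
    · simp [hg]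
    · simp only [hg, if_neg, if_false, if_neg hne]
      exact (huniq g hg).symm
  · intro z
    have hz : z = 1 ∨ z = Multiplicative.ofAdd 1 := by revert z; decide
    rcases hz with hz | hz
    · simp [hz]
    · simp [hz, hne, ha]
  · intro g h'
    by_cases hg : g = 1
    · simp [hg]
    · by_cases hh : h' = 1
      · simp [hh]
      · have hgh : g * h' = 1 := by
          rw [huniq g hg, huniq h' hh, haa]
        simp only [hg, hh, hgh, if_pos rfl, if_neg, if_false]
        decide

/-- If `P` is a semi-regular poset representation (free action, any
number of orbits) of a group `G` that is neither trivial nor `ℤ/2ℤ`, then `P` is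
connected: any two points are joined by the reflexive-transitive closure of
comparability. -/
theorem connected_of_semiRegular_rep (G : Type*) [Group G]
    (hnt : Nontrivial G) (h2 : IsEmpty (G ≃* Multiplicative (ZMod 2)))
    (P : Type*) [PartialOrder P] (ρ : G ≃* (P ≃o P))
    (hfree : ∀ (g : G) (p : P), ρ g p = p → g = 1)
    (x y : P) :
    Relation.ReflTransGen (fun a b : P => a ≤ b ∨ b ≤ a) x y := by
  classical
  set E : P → P → Prop := Relation.ReflTransGen (fun a b : P => a ≤ b ∨ b ≤ a) with hE
  show E x y
  by_contra hxy
  have Esymm : ∀ {a b : P}, E a b → E b a :=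
    fun {a b} h => @Std.Symm.symm _ _ (@Relation.ReflTransGen.stdSymm _ _ ⟨fun u v huv => huv.symm⟩) a b h
  have Etrans : ∀ {a b c : P}, E a b → E b c → E a c :=
    fun h1 h2 => Relation.ReflTransGen.trans h1 h2
  have Erefl : ∀ a : P, E a a := fun a => Relation.ReflTransGen.refl
  have Estep : ∀ {a b : P}, a ≤ b → E a b :=
    fun h => Relation.ReflTransGen.single (Or.inl h)
  have Emap : ∀ (f : P ≃o P) {a b : P}, E a b → E (f a) (f b) := by
    intro f a b h
    exact Relation.ReflTransGen.lift f
      (fun u v (huv : u ≤ v ∨ v ≤ u) => huv.imp (fun h' => f.le_iff_le.mpr h') (fun h' => f.le_iff_le.mpr h')) a b h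
  have keymul : ∀ (g h : G) (z : P), ρ (g * h) z = ρ g (ρ h z) := by
    intro g h z; rw [map_mul]; rfl
  have keyone : ∀ z : P, ρ (1 : G) z = z := by
    intro z; rw [map_one]; rfl
  have keyinv : ∀ (g : G) (z : P), ρ g⁻¹ (ρ g z) = z := by
    intro g z; rw [← keymul, inv_mul_cancel, keyone]
  have keyinv' : ∀ (g : G) (z : P), ρ g (ρ g⁻¹ z) = z := by
    intro g z; rw [← keymul, mul_inv_cancel, keyone]
  -- No nontrivial element stabilizes any connected component.
  have L1 : ∀ (g : G), g ≠ 1 → ∀ p : P, ¬ E p (ρ g p) := by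
    intro g hg p hEp
    -- find a point outside the component of p
    have hq : ∃ q : P, ¬ E p q := by
      by_cases hpx : E p x
      · exact ⟨y, fun h => hxy (Etrans (Esymm hpx) h)⟩
      · exact ⟨x, hpx⟩
    obtain ⟨q, hq⟩ := hq
    -- the automorphism acting by g on the component of p, identity elsewhere
    have hfwd : ∀ z : P, E p z → E p (ρ g z) :=
      fun z h => Etrans hEp (Emap (ρ g) h)
    have hbwd : ∀ z : P, E p z → E p (ρ g⁻¹ z) := by
      intro z h
      have h1 : E (ρ g⁻¹ p) (ρ g⁻¹ z) := Emap (ρ g⁻¹) h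
      have h2 : E p (ρ g⁻¹ p) := by
        have := Emap (ρ g⁻¹) hEp
        rw [keyinv] at this
        exact Esymm this
      exact Etrans h2 h1
    have hcomp : ∀ {z w : P}, z ≤ w → (E p z ↔ E p w) := by
      intro z w hzw
      constructor
      · exact fun h => Etrans h (Estep hzw)
      · exact fun h => Etrans h (Esymm (Estep hzw))
    set τ : P ≃o P := mkIsoAux (fun z => if E p z then ρ g z else z)
      (fun z => if E p z then ρ g⁻¹ z else z)
      (by
        intro z
        by_cases h : E p z
        · simp only [if_pos h, if_pos (hfwd z h), keyinv]
        · simp only [if_neg h])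
      (by
        intro z
        by_cases h : E p z
        · simp only [if_pos h, if_pos (hbwd z h), keyinv']
        · simp only [if_neg h])
      (by
        intro z w hzw
        by_cases h : E p z
        · simp only [if_pos h, if_pos ((hcomp hzw).mp h)]
          exact (ρ g).le_iff_le.mpr hzw
        · simp only [if_neg h, if_neg (fun h' => h ((hcomp hzw).mpr h'))]
          exact hzw)
      (by
        intro z w hzw
        by_cases h : E p z
        · simp only [if_pos h, if_pos ((hcomp hzw).mp h)]
          exact (ρ g⁻¹).le_iff_le.mpr hzw
        · simp only [if_neg h, if_neg (fun h' => h ((hcomp hzw).mpr h'))]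
          exact hzw) with hτ
    have hρτ : ρ (ρ.symm τ) = τ := ρ.apply_symm_apply τ
    have hτq : τ q = q := by
      show (if E p q then ρ g q else q) = q
      rw [if_neg hq]
    have h1 : ρ.symm τ = 1 := hfree _ q (by rw [hρτ]; exact hτq)
    have hτ1 : τ = 1 := by rw [← hρτ, h1, map_one]
    have hτp : τ p = ρ g p := by
      show (if E p p then ρ g p else p) = ρ g p
      rw [if_pos (Erefl p)]
    have : ρ g p = p := by rw [← hτp, hτ1]; rfl
    exact hg (hfree g p this)
  -- distinct group elements move `x` into distinct components
  have L2 : ∀ (g g' : G), g ≠ g' → ¬ E (ρ g x) (ρ g' x) := by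
    intro g g' hgg' hE'
    have h1 : E (ρ g'⁻¹ (ρ g x)) (ρ g'⁻¹ (ρ g' x)) := Emap (ρ g'⁻¹) hE'
    rw [keyinv, ← keymul] at h1
    exact L1 (g'⁻¹ * g) (fun h => hgg' (inv_mul_eq_one.mp h).symm) x (Esymm h1)
  obtain ⟨a, b, ha, hb, hab⟩ := exists_two_ne_aux G hnt h2
  -- key facts about the components C = [x], aC = [ρ a x]
  have hax : ¬ E x (ρ a x) := L1 a ha x
  have hdisj : ∀ z : P, E x z → ¬ E (ρ a x) z :=
    fun z h1 h2 => hax (Etrans h1 (Esymm h2))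
  have hC_to : ∀ z : P, E x z → E (ρ a x) (ρ a z) := fun z h => Emap (ρ a) h
  have hC_to' : ∀ z : P, E x z → ¬ E x (ρ a z) :=
    fun z h h' => hdisj _ h' (hC_to z h)
  have haC_to : ∀ z : P, E (ρ a x) z → E x (ρ a⁻¹ z) := by
    intro z h
    have := Emap (ρ a⁻¹) h
    rwa [keyinv] at this
  have haC_to' : ∀ z : P, E (ρ a x) z → E x (ρ a⁻¹ z) ∧ ¬ E (ρ a x) (ρ a⁻¹ z) := by
    intro z h
    exact ⟨haC_to z h, fun h' => hdisj _ (haC_to z h) h'⟩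
  have hcompx : ∀ {z w : P}, z ≤ w → (E x z ↔ E x w) := by
    intro z w hzw
    exact ⟨fun h => Etrans h (Estep hzw), fun h => Etrans h (Esymm (Estep hzw))⟩
  have hcompax : ∀ {z w : P}, z ≤ w → (E (ρ a x) z ↔ E (ρ a x) w) := by
    intro z w hzw
    exact ⟨fun h => Etrans h (Estep hzw), fun h => Etrans h (Esymm (Estep hzw))⟩
  -- the involutive automorphism swapping C and aC, identity elsewhere
  set f : P → P := fun z => if E x z then ρ a z else if E (ρ a x) z then ρ a⁻¹ z else z with hf
  have hinvol : ∀ z : P, f (f z) = z := by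
    intro z
    by_cases h1 : E x z
    · have h2 : E (ρ a x) (ρ a z) := hC_to z h1
      have h3 : ¬ E x (ρ a z) := hC_to' z h1
      simp only [hf, if_pos h1, if_neg h3, if_pos h2, keyinv]
    · by_cases h2 : E (ρ a x) z
      · have h3 : E x (ρ a⁻¹ z) := haC_to z h2
        simp only [hf, if_neg h1, if_pos h2, if_pos h3, keyinv']
      · simp only [hf, if_neg h1, if_neg h2]
  have hmono : ∀ z w : P, z ≤ w → f z ≤ f w := by
    intro z w hzw
    by_cases h1 : E x z
    · simp only [hf, if_pos h1, if_pos ((hcompx hzw).mp h1)]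
      exact (ρ a).le_iff_le.mpr hzw
    · have h1w : ¬ E x w := fun h => h1 ((hcompx hzw).mpr h)
      by_cases h2 : E (ρ a x) z
      · simp only [hf, if_neg h1, if_neg h1w, if_pos h2, if_pos ((hcompax hzw).mp h2)]
        exact (ρ a⁻¹).le_iff_le.mpr hzw
      · have h2w : ¬ E (ρ a x) w := fun h => h2 ((hcompax hzw).mpr h)
        simp only [hf, if_neg h1, if_neg h1w, if_neg h2, if_neg h2w]
        exact hzw
  set σ : P ≃o P := mkIsoAux f f hinvol hinvol hmono hmono with hσ
  have hρσ : ρ (ρ.symm σ) = σ := ρ.apply_symm_apply σ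
  have hσx : σ x = ρ a x := by
    show f x = ρ a x
    simp only [hf, if_pos (Erefl x)]
  -- σ = ρ a by freeness
  have hsymm_eq : ρ.symm σ = a := by
    have h1 : ρ (a⁻¹ * ρ.symm σ) x = x := by
      rw [keymul, hρσ, hσx, keyinv]
    exact (inv_mul_eq_one.mp (hfree _ x h1)).symm
  have hρaσ : ∀ z : P, ρ a z = σ z := by
    intro z
    rw [← hρσ, hsymm_eq]
  -- but σ fixes ρ b x, which ρ a does not
  have h1 : ¬ E x (ρ b x) := L1 b hb x
  have h2 : ¬ E (ρ a x) (ρ b x) := L2 a b hab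
  have hfix : σ (ρ b x) = ρ b x := by
    show f (ρ b x) = ρ b x
    simp only [hf, if_neg h1, if_neg h2]
  have h3 : ρ a (ρ b x) = ρ b x := by rw [hρaσ, hfix]
  have h4 : ρ (b⁻¹ * (a * b)) x = x := by
    rw [keymul, keymul, h3, keyinv]
  have h5 : a * b = b := (inv_mul_eq_one.mp (hfree _ x h4)).symm
  exact ha (mul_right_cancel (b := b) (by rw [h5, one_mul]))
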